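/- Minimization property of the matrix Bregman divergence: for a fixed symmetric positive definite matrix P, the function Q ↦ tr(P log P − P log Q − P + Q) over symmetric positive definite matrices Q is nonnegative and equals zero if and only if Q = P. -/

import Mathlib

open Matrix

/-- The principal matrix logarithm of a symmetric real matrix, via the spectral theorem. -/
noncomputable def matLog {n : ℕ} (A : Matrix (Fin n) (Fin n) ℝ) : Matrix (Fin n) (Fin n) ℝ :=
  if h : A.IsHermitian then h.cfc Real.log else 0

lemma scalar_bregman_nonneg {a b : ℝ} (ha : 0 < a) (hb : 0 < b) :
    0 ≤ a * Real.log a - a * Real.log b - a + b := by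
  have h := Real.log_le_sub_one_of_pos (div_pos hb ha)
  rw [Real.log_div hb.ne' ha.ne'] at h
  have h2 := mul_le_mul_of_nonneg_left h ha.le
  have h3 : a * (b / a) = b := mul_div_cancel₀ b ha.ne'
  nlinarith [h2, h3]

lemma scalar_bregman_pos {a b : ℝ} (ha : 0 < a) (hb : 0 < b) (hab : a ≠ b) :
    0 < a * Real.log a - a * Real.log b - a + b := by
  have hba : b / a ≠ 1 := fun h => hab ((div_eq_one_iff_eq ha.ne').mp h).symm
  have h := Real.log_lt_sub_one_of_pos (div_pos hb ha) hba
  rw [Real.log_div hb.ne' ha.ne'] at h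
  have h2 := mul_lt_mul_of_pos_left h ha
  have h3 : a * (b / a) = b := mul_div_cancel₀ b ha.ne'
  nlinarith [h2, h3]

lemma trace_conj_unitary {n : ℕ} (u : Matrix.unitaryGroup (Fin n) ℝ)
    (M : Matrix (Fin n) (Fin n) ℝ) :
    ((u : Matrix (Fin n) (Fin n) ℝ) * M * star (u : Matrix (Fin n) (Fin n) ℝ)).trace
      = M.trace := by
  rw [trace_mul_cycle, Matrix.mem_unitaryGroup_iff'.mp u.2, one_mul]

lemma trace_quad {n : ℕ} (a b : Fin n → ℝ) (W : Matrix (Fin n) (Fin n) ℝ) :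
    (diagonal a * W * diagonal b * star W).trace
      = ∑ i, ∑ j, (W i j) ^ 2 * (a i * b j) := by
  have h : ∀ i, (diagonal a * W * diagonal b * star W) i i
      = ∑ j, (W i j) ^ 2 * (a i * b j) := by
    intro i
    rw [Matrix.mul_apply]
    refine Finset.sum_congr rfl fun j _ => ?_
    rw [Matrix.mul_diagonal, Matrix.diagonal_mul, Matrix.star_apply, star_trivial]
    ring
  simp only [Matrix.trace, Matrix.diag_apply, h]

/-- Minimization property of the matrix Bregman divergence: for a fixed
symmetric positive definite `P`, the function `Q ↦ tr(P log P − P log Q − P + Q)` over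
symmetric positive definite matrices `Q` is nonnegative, and equals zero iff `Q = P`. -/
theorem bregman_min {n : ℕ} (P : Matrix (Fin n) (Fin n) ℝ)
    (hPsymm : P.IsSymm) (hPpd : P.PosDef) :
    ∀ Q : Matrix (Fin n) (Fin n) ℝ, Q.IsSymm → Q.PosDef →
      0 ≤ (P * matLog P - P * matLog Q - P + Q).trace ∧
      ((P * matLog P - P * matLog Q - P + Q).trace = 0 ↔ Q = P) := by
  intro Q hQsymm hQpd
  have hP : P.IsHermitian := hPpd.isHermitian
  have hQ : Q.IsHermitian := hQpd.isHermitian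
  set u := hP.eigenvectorUnitary with hu_def
  set v := hQ.eigenvectorUnitary with hv_def
  set U : Matrix (Fin n) (Fin n) ℝ := (u : Matrix (Fin n) (Fin n) ℝ) with hU_def
  set V : Matrix (Fin n) (Fin n) ℝ := (v : Matrix (Fin n) (Fin n) ℝ) with hV_def
  set lam := hP.eigenvalues with hlam_def
  set mu := hQ.eigenvalues with hmu_def
  have hlam_pos : ∀ i, 0 < lam i := fun i => hPpd.eigenvalues_pos i
  have hmu_pos : ∀ j, 0 < mu j := fun j => hQpd.eigenvalues_pos j
  have hUU : star U * U = 1 := Matrix.mem_unitaryGroup_iff'.mp u.2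
  have hUU' : U * star U = 1 := Matrix.mem_unitaryGroup_iff.mp u.2
  have hVV : star V * V = 1 := Matrix.mem_unitaryGroup_iff'.mp v.2
  have hVV' : V * star V = 1 := Matrix.mem_unitaryGroup_iff.mp v.2
  set W : Matrix (Fin n) (Fin n) ℝ := star U * V with hW_def
  have hstarW : star W = star V * U := by rw [hW_def, Matrix.star_mul, star_star]
  have hWW' : W * star W = 1 := by
    rw [hW_def, hstarW]
    calc star U * V * (star V * U) = star U * (V * star V) * U := by
          simp only [mul_assoc]
      _ = 1 := by rw [hVV', mul_one, hUU]
  have hWW : star W * W = 1 := by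
    rw [hW_def, hstarW]
    calc star V * U * (star U * V) = star V * (U * star U) * V := by
          simp only [mul_assoc]
      _ = 1 := by rw [hUU', mul_one, hVV]
  -- row and column sums of W^2
  have hrow : ∀ i, ∑ j, (W i j) ^ 2 = 1 := by
    intro i
    have := congrFun (congrFun hWW' i) i
    simp only [Matrix.mul_apply, Matrix.star_apply, star_trivial, Matrix.one_apply_eq] at this
    simpa [pow_two] using this
  have hcol : ∀ j, ∑ i, (W i j) ^ 2 = 1 := by
    intro j
    have := congrFun (congrFun hWW j) j
    simp only [Matrix.mul_apply, Matrix.star_apply, star_trivial, Matrix.one_apply_eq] at this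
    rw [← this]
    exact Finset.sum_congr rfl fun i _ => by ring
  -- spectral decompositions
  have hPspec : P = U * diagonal lam * star U := by
    have := hP.spectral_theorem
    simpa [RCLike.ofReal_real_eq_id] using this
  have hQspec : Q = V * diagonal mu * star V := by
    have := hQ.spectral_theorem
    simpa [RCLike.ofReal_real_eq_id] using this
  have hlogP : matLog P = U * diagonal (Real.log ∘ lam) * star U := by
    rw [matLog, dif_pos hP, Matrix.IsHermitian.cfc]
    simp [RCLike.ofReal_real_eq_id, Function.comp_def]
    rfl
  have hlogQ : matLog Q = V * diagonal (Real.log ∘ mu) * star V := by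
    rw [matLog, dif_pos hQ, Matrix.IsHermitian.cfc]
    simp [RCLike.ofReal_real_eq_id, Function.comp_def]
    rfl
  -- the four trace computations
  have t1 : (P * matLog P).trace = ∑ i, lam i * Real.log (lam i) := by
    rw [hlogP, hPspec]
    have : U * diagonal lam * star U * (U * diagonal (Real.log ∘ lam) * star U)
        = U * (diagonal lam * diagonal (Real.log ∘ lam)) * star U := by
      simp only [mul_assoc]
      rw [← mul_assoc (star U) U, hUU, one_mul]
    rw [this, trace_conj_unitary u, diagonal_mul_diagonal, trace_diagonal]
    simp [Function.comp]
  have t2 : (P * matLog Q).trace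
      = ∑ i, ∑ j, (W i j) ^ 2 * (lam i * Real.log (mu j)) := by
    rw [hlogQ, hPspec]
    have : U * diagonal lam * star U * (V * diagonal (Real.log ∘ mu) * star V)
        = U * (diagonal lam * W * diagonal (Real.log ∘ mu) * star W) * star U := by
      rw [hstarW, hW_def]
      simp only [mul_assoc, hUU', mul_one]
    rw [this, trace_conj_unitary u, trace_quad]
    simp [Function.comp]
  have t3 : P.trace = ∑ i, lam i := by
    rw [hPspec, trace_conj_unitary u, trace_diagonal]
  have t4 : Q.trace = ∑ j, mu j := by
    rw [hQspec, trace_conj_unitary v, trace_diagonal]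
  -- combined trace formula
  have key : (P * matLog P - P * matLog Q - P + Q).trace
      = ∑ i, ∑ j, (W i j) ^ 2
          * (lam i * Real.log (lam i) - lam i * Real.log (mu j) - lam i + mu j) := by
    rw [trace_add, trace_sub, trace_sub, t1, t2, t3, t4]
    have e1 : ∑ i, lam i * Real.log (lam i)
        = ∑ i, ∑ j, (W i j) ^ 2 * (lam i * Real.log (lam i)) := by
      refine Finset.sum_congr rfl fun i _ => ?_
      rw [← Finset.sum_mul, hrow i, one_mul]
    have e3 : ∑ i, lam i = ∑ i, ∑ j, (W i j) ^ 2 * lam i := by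
      refine Finset.sum_congr rfl fun i _ => ?_
      rw [← Finset.sum_mul, hrow i, one_mul]
    have e4 : ∑ j, mu j = ∑ i, ∑ j, (W i j) ^ 2 * mu j := by
      rw [Finset.sum_comm]
      refine Finset.sum_congr rfl fun j _ => ?_
      rw [← Finset.sum_mul, hcol j, one_mul]
    rw [e1, e3, e4]
    simp only [← Finset.sum_sub_distrib, ← Finset.sum_add_distrib]
    refine Finset.sum_congr rfl fun i _ => Finset.sum_congr rfl fun j _ => by ring
  have hterm_nonneg : ∀ i ∈ Finset.univ, ∀ j ∈ (Finset.univ : Finset (Fin n)),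
      0 ≤ (W i j) ^ 2
        * (lam i * Real.log (lam i) - lam i * Real.log (mu j) - lam i + mu j) :=
    fun i _ j _ => mul_nonneg (sq_nonneg _)
      (scalar_bregman_nonneg (hlam_pos i) (hmu_pos j))
  constructor
  · rw [key]
    exact Finset.sum_nonneg fun i hi => Finset.sum_nonneg (hterm_nonneg i hi)
  constructor
  · intro h0
    rw [key] at h0
    have hz := (Finset.sum_eq_zero_iff_of_nonneg
      (fun i hi => Finset.sum_nonneg (hterm_nonneg i hi))).mp h0
    have hz' : ∀ i j, (W i j) ^ 2
        * (lam i * Real.log (lam i) - lam i * Real.log (mu j) - lam i + mu j) = 0 := by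
      intro i j
      have := (Finset.sum_eq_zero_iff_of_nonneg (hterm_nonneg i (Finset.mem_univ i))).mp
        (hz i (Finset.mem_univ i)) j (Finset.mem_univ j)
      exact this
    have hWE : ∀ i j, W i j = 0 ∨ lam i = mu j := by
      intro i j
      rcases mul_eq_zero.mp (hz' i j) with h | h
      · exact Or.inl (pow_eq_zero_iff (by norm_num) |>.mp h)
      · right
        by_contra hne
        exact absurd h (scalar_bregman_pos (hlam_pos i) (hmu_pos j) hne).ne'
    have hDW : diagonal lam * W = W * diagonal mu := by
      ext i j
      rw [Matrix.diagonal_mul, Matrix.mul_diagonal]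
      rcases hWE i j with h | h
      · rw [h]; ring
      · rw [h]; ring
    have hVUW : V = U * W := by
      rw [hW_def, ← mul_assoc, hUU', one_mul]
    calc Q = V * diagonal mu * star V := hQspec
      _ = U * (W * diagonal mu * star W) * star U := by
          rw [hVUW, Matrix.star_mul]
          simp only [mul_assoc]
      _ = U * (diagonal lam * (W * star W)) * star U := by
          rw [← hDW]; simp only [mul_assoc]
      _ = U * diagonal lam * star U := by rw [hWW', mul_one]
      _ = P := hPspec.symm
  · intro h
    rw [h]
    have : P * matLog P - P * matLog P - P + P = 0 := by abel
    rw [this, trace_zero]
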